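/- arXiv:1410.0795 — 2 statements merged into one kernel-verified Lean document; each statement's English description precedes it below -/
import Mathlib

section
/- Let M = ⊕_{i=1}^r I_i e_i ⊊ F be a squarefree stable submodule and β_{k,k+ℓ}(M) an extremal Betti number of M. Then β_{k,k+ℓ}(M) = |{u e_i ∈ G(M)_ℓ : m(u) + f_i = k + ℓ, i = 1,...,r}|. -/
open scoped Classical

noncomputable section

/-- The squarefree monomial `∏_{i ∈ A} x_i` of `S = K[x_1,…,x_n]`,
encoded by its support `A ⊆ {1,…,n}`. -/
def sqMon (K : Type*) [Field K] {n : ℕ} (A : Finset (Fin n)) : MvPolynomial (Fin n) K :=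
  ∏ i ∈ A, MvPolynomial.X i

/-- `[x_1,…,x_n]^d`: the ideal generated by all squarefree monomials of degree `d`. -/
def sqPow (K : Type*) [Field K] (n d : ℕ) : Ideal (MvPolynomial (Fin n) K) :=
  Ideal.span {p | ∃ A : Finset (Fin n), A.card = d ∧ p = sqMon K A}

/-- `I` is a squarefree monomial ideal: generated by squarefree monomials. -/
def IsSqMonIdeal (K : Type*) [Field K] {n : ℕ} (I : Ideal (MvPolynomial (Fin n) K)) : Prop :=
  ∃ G : Set (Finset (Fin n)), I = Ideal.span (sqMon K '' G)

/-- `A` encodes a minimal monomial generator of the squarefree monomial ideal `I`. -/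
def IsMinGen (K : Type*) [Field K] {n : ℕ} (I : Ideal (MvPolynomial (Fin n) K))
    (A : Finset (Fin n)) : Prop :=
  sqMon K A ∈ I ∧ ∀ B : Finset (Fin n), B ⊂ A → sqMon K B ∉ I

/-- `m(u)` : the largest index (1-based) occurring in the squarefree monomial with support `A`. -/
def mIdx {n : ℕ} (A : Finset (Fin n)) : ℕ := A.sup (fun i => i.1 + 1)

/-- Squarefree stable ideal: for every minimal generator `u`,
`x_j u / x_{m(u)} ∈ I` for all `j < m(u)`, `j ∉ supp u`. -/
def IsSqStableIdeal (K : Type*) [Field K] {n : ℕ} (I : Ideal (MvPolynomial (Fin n) K)) : Prop :=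
  IsSqMonIdeal K I ∧ ∀ A : Finset (Fin n), IsMinGen K I A →
    ∀ (hA : A.Nonempty) (j : Fin n), j ∉ A → j < A.max' hA →
      sqMon K (insert j (A.erase (A.max' hA))) ∈ I

/-- Squarefree strongly stable ideal: for every minimal generator `u`,
`x_j u / x_i ∈ I` for all `i ∈ supp u` and `j < i`, `j ∉ supp u`. -/
def IsSqStronglyStableIdeal (K : Type*) [Field K] {n : ℕ}
    (I : Ideal (MvPolynomial (Fin n) K)) : Prop :=
  IsSqMonIdeal K I ∧ ∀ A : Finset (Fin n), IsMinGen K I A →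
    ∀ i ∈ A, ∀ j : Fin n, j ∉ A → j < i → sqMon K (insert j (A.erase i)) ∈ I

/-- The squarefree lexicographic order (on supports of equal-degree squarefree monomials):
`A >_slex B` iff at the first index where they differ, `A` has the smaller index. -/
def slexGT {n : ℕ} (A B : Finset (Fin n)) : Prop :=
  ∃ h : (symmDiff A B).Nonempty, (symmDiff A B).min' h ∈ A

/-- Squarefree lexsegment ideal. -/
def IsSqLexIdeal (K : Type*) [Field K] {n : ℕ} (I : Ideal (MvPolynomial (Fin n) K)) : Prop :=
  IsSqMonIdeal K I ∧ ∀ A B : Finset (Fin n), A.card = B.card →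
    sqMon K A ∈ I → slexGT B A → sqMon K B ∈ I

/-- `indeg I`: the least degree of a (squarefree) monomial in `I`. -/
def indeg (K : Type*) [Field K] {n : ℕ} (I : Ideal (MvPolynomial (Fin n) K)) : ℕ :=
  sInf {d : ℕ | ∃ A : Finset (Fin n), A.card = d ∧ sqMon K A ∈ I}

/-- `G(I)_d`: the minimal generators of `I` in degree `d`, as a finset of supports. -/
def mgens (K : Type*) [Field K] {n : ℕ} (I : Ideal (MvPolynomial (Fin n) K)) (d : ℕ) :
    Finset (Finset (Fin n)) :=
  Finset.univ.filter (fun A => IsMinGen K I A ∧ A.card = d)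

/-- Graded Betti numbers `β_{k,k+j}(M)` of `M = ⊕ I_i e_i` (deg `e_i = f i`),
via the Aramova–Herzog–Hibi formula. -/
def betti (K : Type*) [Field K] {n r : ℕ} (I : Fin r → Ideal (MvPolynomial (Fin n) K))
    (f : Fin r → ℕ) (k j : ℕ) : ℕ :=
  ∑ i : Fin r, ∑ A ∈ mgens K (I i) (j - f i), Nat.choose (mIdx A - A.card) k

/-- Graded Betti numbers `β_{k,k+j}(I)` of a squarefree stable ideal (AHH formula). -/
def bettiI (K : Type*) [Field K] {n : ℕ} (I : Ideal (MvPolynomial (Fin n) K)) (k j : ℕ) : ℕ :=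
  ∑ A ∈ mgens K I j, Nat.choose (mIdx A - A.card) k

/-- `β k ℓ` (standing for `β_{k,k+ℓ}`) is an extremal Betti number. -/
def IsExtremal (β : ℕ → ℕ → ℕ) (k ℓ : ℕ) : Prop :=
  β k ℓ ≠ 0 ∧ ∀ i j : ℕ, k ≤ i → ℓ ≤ j → (i, j) ≠ (k, ℓ) → β i j = 0

/-- Squarefree stable submodule `M = ⊕ I_i e_i ⊊ F` (characterization):
each `I_i` a proper squarefree stable ideal, and
`[x_1,…,x_n]^{f_{i+1}-f_i} I_{i+1} ⊆ I_i`. -/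
def IsSqStableSubmodule (K : Type*) [Field K] {n r : ℕ}
    (I : Fin r → Ideal (MvPolynomial (Fin n) K)) (f : Fin r → ℕ) : Prop :=
  (∀ i, I i ≠ ⊤ ∧ IsSqStableIdeal K (I i)) ∧
  ∀ i : Fin r, ∀ h : i.1 + 1 < r,
    sqPow K n (f ⟨i.1 + 1, h⟩ - f i) * I ⟨i.1 + 1, h⟩ ≤ I i

/-- Squarefree lexicographic submodule (characterization of Proposition `lex`):
each `I_i` a proper squarefree lexsegment ideal, and
`[x_1,…,x_n]^{indeg I_{i+1} + f_{i+1} - f_i} ⊆ I_i`. -/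
def IsSqLexSubmodule (K : Type*) [Field K] {n r : ℕ}
    (I : Fin r → Ideal (MvPolynomial (Fin n) K)) (f : Fin r → ℕ) : Prop :=
  (∀ i, IsSqLexIdeal K (I i) ∧ I i ≠ ⊤) ∧
  ∀ i : Fin r, ∀ h : i.1 + 1 < r,
    sqPow K n (indeg K (I ⟨i.1 + 1, h⟩) + f ⟨i.1 + 1, h⟩ - f i) ≤ I i

end

lemma card_le_mIdx {n : ℕ} (A : Finset (Fin n)) : A.card ≤ mIdx A := by
  have h : A.image Fin.val ⊆ Finset.range (mIdx A) := by
    intro v hv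
    simp only [Finset.mem_image] at hv
    obtain ⟨i, hi, rfl⟩ := hv
    have : i.1 + 1 ≤ mIdx A := Finset.le_sup (f := fun i : Fin n => i.1 + 1) hi
    exact Finset.mem_range.mpr (by omega)
  calc A.card = (A.image Fin.val).card :=
        (Finset.card_image_of_injective A Fin.val_injective).symm
    _ ≤ (Finset.range (mIdx A)).card := Finset.card_le_card h
    _ = mIdx A := Finset.card_range _

/-- if `β_{k,k+ℓ}(M)` is extremal then
`β_{k,k+ℓ}(M) = |{u e_i ∈ G(M)_ℓ : m(u) + f_i = k + ℓ}|`. -/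
theorem stmt_9 (K : Type*) [Field K] (n r : ℕ)
    (I : Fin r → Ideal (MvPolynomial (Fin n) K)) (f : Fin r → ℕ) (hf : Monotone f)
    (hM : IsSqStableSubmodule K I f) (k ℓ : ℕ)
    (hext : IsExtremal (betti K I f) k ℓ) :
    betti K I f k ℓ = Set.ncard {p : Fin r × Finset (Fin n) |
      IsMinGen K (I p.1) p.2 ∧ p.2.card + f p.1 = ℓ ∧ mIdx p.2 + f p.1 = k + ℓ} := by
  classical
  have hI : ∀ i, I i ≠ ⊤ := fun i => (hM.1 i).1
  have key : ∀ (i : Fin r) (A : Finset (Fin n)),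
      IsMinGen K (I i) A → A.card = ℓ - f i → mIdx A - A.card ≤ k := by
    intro i A hgen hcard
    by_contra h
    push_neg at h
    have hb : betti K I f (mIdx A - A.card) ℓ ≠ 0 := by
      intro h0
      unfold betti at h0
      have h1 := (Finset.sum_eq_zero_iff).mp h0 i (Finset.mem_univ i)
      have hmem : A ∈ mgens K (I i) (ℓ - f i) :=
        Finset.mem_filter.mpr ⟨Finset.mem_univ _, hgen, hcard⟩
      have h2 := (Finset.sum_eq_zero_iff).mp h1 A hmem
      simp [Nat.choose_self] at h2
    exact hb (hext.2 (mIdx A - A.card) ℓ (le_of_lt h) le_rfl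
      (by simp only [ne_eq, Prod.mk.injEq, not_and]; intro hmk; omega))
  rw [Set.ncard_eq_toFinset_card', Set.toFinset_setOf, Finset.card_filter,
    Fintype.sum_prod_type]
  unfold betti
  refine Finset.sum_congr rfl ?_
  intro i _
  rw [mgens, Finset.sum_filter]
  refine Finset.sum_congr rfl ?_
  intro A _
  by_cases hg : IsMinGen K (I i) A
  · by_cases hc : A.card = ℓ - f i
    · have hA : A ≠ ∅ := by
        intro hAe
        subst hAe
        have h1 : (1 : MvPolynomial (Fin n) K) ∈ I i := by
          have := hg.1
          simpa [sqMon] using this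
        exact hI i ((Ideal.eq_top_iff_one _).mpr h1)
      have hcard_pos : 0 < A.card :=
        Finset.card_pos.mpr (Finset.nonempty_iff_ne_empty.mpr hA)
      have hfi : f i ≤ ℓ := by omega
      have hk := key i A hg hc
      have hcm := card_le_mIdx A
      by_cases he : mIdx A - A.card = k
      · have h1 : A.card + f i = ℓ := by omega
        have h2 : mIdx A + f i = k + ℓ := by omega
        rw [if_pos ⟨hg, hc⟩, if_pos ⟨hg, h1, h2⟩, he, Nat.choose_self]
      · have hlt : mIdx A - A.card < k := lt_of_le_of_ne hk he
        have h2 : mIdx A + f i ≠ k + ℓ := by omega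
        rw [if_pos ⟨hg, hc⟩, if_neg (fun h => h2 h.2.2), Nat.choose_eq_zero_of_lt hlt]
    · have h1 : ¬ (A.card + f i = ℓ) := fun h => hc (by omega)
      rw [if_neg (fun h => hc h.2), if_neg (fun h => h1 h.2.1)]
  · rw [if_neg (fun h => hg h.1), if_neg (fun h => hg h.1)]
end

section
/- Given integers n ≥ 3, 1 ≤ t ≤ n-1, r ≥ t, and t pairs (k_1,ℓ_1),...,(k_t,ℓ_t) with 0 ≤ k_t < ... < k_1 ≤ n-1, 1 ≤ ℓ_1 < ... < ℓ_t ≤ n, and k_i + ℓ_i = n for all i, there exists a squarefree lexicographic submodule L ⊊ S^r generated in degrees ℓ_1,...,ℓ_t whose super extremal Betti numbers are exactly β_{k_1,n}(L),...,β_{k_t,n}(L) (i.e., β_{k,n}(L) ≠ 0 iff k ∈ {k_1,...,k_t}). -/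
open scoped Classical

section Aux
variable (K : Type*) [Field K] {n : ℕ}

lemma sqMon_eq_monomial (A : Finset (Fin n)) :
    sqMon K A = MvPolynomial.monomial (∑ i ∈ A, Finsupp.single i 1) (1 : K) := by
  classical
  induction A using Finset.induction with
  | empty => simp [sqMon]
  | @insert a s ha ih =>
    rw [sqMon, Finset.prod_insert ha, ← sqMon, ih, Finset.sum_insert ha,
      MvPolynomial.X, MvPolynomial.monomial_mul, one_mul]

lemma support_sqMon (A : Finset (Fin n)) :
    (sqMon K A).support = {∑ i ∈ A, Finsupp.single i 1} := by
  rw [sqMon_eq_monomial, MvPolynomial.support_monomial]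
  simp

lemma eA_apply (A : Finset (Fin n)) (i : Fin n) :
    (∑ j ∈ A, Finsupp.single j (1 : ℕ)) i = if i ∈ A then 1 else 0 := by
  classical
  rw [Finset.sum_apply']
  simp [Finsupp.single_apply]

lemma sqPow_good (d : ℕ) {p : MvPolynomial (Fin n) K} (hp : p ∈ sqPow K n d) :
    ∀ m ∈ p.support, ∃ B : Finset (Fin n), B.card = d ∧ ∀ i ∈ B, 1 ≤ m i := by
  classical
  induction hp using Submodule.span_induction with
  | mem x hx =>
    obtain ⟨B, hB, rfl⟩ := hx
    intro m hm
    rw [support_sqMon] at hm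
    simp only [Finset.mem_singleton] at hm
    subst hm
    exact ⟨B, hB, fun i hi => by simp [eA_apply, hi]⟩
  | zero => simp
  | add x y hx hy ihx ihy =>
    intro m hm
    rcases Finset.mem_union.mp (MvPolynomial.support_add hm) with h | h
    · exact ihx m h
    · exact ihy m h
  | smul r x hx ih =>
    intro m hm
    rw [smul_eq_mul] at hm
    obtain ⟨a, ha, b, hb, rfl⟩ := Finset.mem_add.mp (MvPolynomial.support_mul r x hm)
    obtain ⟨B, hB, hB2⟩ := ih b hb
    exact ⟨B, hB, fun i hi => le_trans (hB2 i hi) (by simp [Finsupp.add_apply])⟩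

lemma mem_sqPow_iff (d : ℕ) (A : Finset (Fin n)) :
    sqMon K A ∈ sqPow K n d ↔ ∃ B ⊆ A, B.card = d := by
  classical
  constructor
  · intro h
    obtain ⟨B, hB, hB2⟩ := sqPow_good K d h (∑ i ∈ A, Finsupp.single i 1)
      (by rw [support_sqMon]; simp)
    refine ⟨B, fun i hi => ?_, hB⟩
    have := hB2 i hi
    rw [eA_apply] at this
    by_contra hc
    simp [hc] at this
  · rintro ⟨B, hBA, hB⟩
    have : sqMon K A = sqMon K (A \ B) * sqMon K B := by
      rw [sqMon, sqMon, sqMon, Finset.prod_sdiff hBA]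
    rw [this]
    exact Ideal.mul_mem_left _ _ (Ideal.subset_span ⟨B, hB, rfl⟩)

lemma minGen_sqPow_iff (d : ℕ) (A : Finset (Fin n)) :
    IsMinGen K (sqPow K n d) A ↔ A.card = d := by
  constructor
  · rintro ⟨h1, h2⟩
    obtain ⟨B, hBA, hB⟩ := (mem_sqPow_iff K d A).mp h1
    rcases eq_or_ne B A with rfl | hne
    · exact hB
    · exact absurd ((mem_sqPow_iff K d B).mpr ⟨B, subset_rfl, hB⟩)
        (h2 B (ssubset_of_subset_of_ne hBA hne))
  · intro hA
    refine ⟨(mem_sqPow_iff K d A).mpr ⟨A, subset_rfl, hA⟩, fun B hB hmem => ?_⟩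
    obtain ⟨C, hCB, hC⟩ := (mem_sqPow_iff K d B).mp hmem
    have := (Finset.card_le_card hCB).trans_lt (Finset.card_lt_card hB)
    omega

lemma sqPow_ne_top (d : ℕ) (hd : 1 ≤ d) : sqPow K n d ≠ ⊤ := by
  intro h
  have h1 : sqMon K (∅ : Finset (Fin n)) ∈ sqPow K n d := by rw [h]; trivial
  obtain ⟨B, hBA, hB⟩ := (mem_sqPow_iff K d ∅).mp h1
  rw [Finset.subset_empty.mp hBA] at hB
  simp at hB
  omega

lemma isSqLex_sqPow (d : ℕ) : IsSqLexIdeal K (sqPow K n d) := by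
  constructor
  · refine ⟨{A | A.card = d}, ?_⟩
    unfold sqPow
    congr 1
    ext p
    simp only [Set.mem_setOf_eq, Set.mem_image]
    constructor
    · rintro ⟨A, h1, rfl⟩; exact ⟨A, h1, rfl⟩
    · rintro ⟨A, h1, rfl⟩; exact ⟨A, h1, rfl⟩
  · intro A B hcard hA _
    obtain ⟨C, hCA, hC⟩ := (mem_sqPow_iff K d A).mp hA
    have : d ≤ B.card := by
      have := Finset.card_le_card hCA; omega
    obtain ⟨C', hC'B, hC'⟩ := Finset.exists_subset_card_eq this
    exact (mem_sqPow_iff K d B).mpr ⟨C', hC'B, hC'⟩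

lemma indeg_sqPow (d : ℕ) (hd : d ≤ n) : indeg K (sqPow K n d) = d := by
  obtain ⟨A, _, hA⟩ := Finset.exists_subset_card_eq
    (show d ≤ (Finset.univ : Finset (Fin n)).card by simp [hd])
  have hmem : d ∈ {d' : ℕ | ∃ A : Finset (Fin n), A.card = d' ∧ sqMon K A ∈ sqPow K n d} :=
    ⟨A, hA, (mem_sqPow_iff K d A).mpr ⟨A, subset_rfl, hA⟩⟩
  refine le_antisymm (Nat.sInf_le hmem) (le_csInf ⟨d, hmem⟩ ?_)
  rintro d' ⟨B, rfl, hB⟩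
  obtain ⟨C, hCB, hC⟩ := (mem_sqPow_iff K d B).mp hB
  have := Finset.card_le_card hCB
  omega

lemma sqPow_anti {d d' : ℕ} (h : d ≤ d') : sqPow K n d' ≤ sqPow K n d := by
  rw [sqPow, Ideal.span_le]
  rintro p ⟨A, hA, rfl⟩
  obtain ⟨B, hBA, hB⟩ := Finset.exists_subset_card_eq (show d ≤ A.card by omega)
  exact (mem_sqPow_iff K d A).mpr ⟨B, hBA, hB⟩

end Aux

/-- given `n ≥ 3`, `1 ≤ t ≤ n-1`, `r ≥ t` and pairs `(k_i, ℓ_i)` with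
`k_1 > ⋯ > k_t`, `ℓ_1 < ⋯ < ℓ_t`, `k_i + ℓ_i = n`, there is a squarefree lexicographic
submodule `L ⊊ S^r` generated in degrees `ℓ_1,…,ℓ_t` whose super extremal Betti numbers
are exactly `β_{k_1,n}(L),…,β_{k_t,n}(L)`. -/
theorem stmt_16 (K : Type*) [Field K] (n t r : ℕ) (hn : 3 ≤ n)
    (ht1 : 1 ≤ t) (htn : t ≤ n - 1) (hr : t ≤ r)
    (k ℓ : Fin t → ℕ) (hk : StrictAnti k) (hℓ : StrictMono ℓ)
    (hkn : ∀ i, k i ≤ n - 1) (hℓ1 : ∀ i, 1 ≤ ℓ i) (hℓn : ∀ i, ℓ i ≤ n)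
    (hsum : ∀ i, k i + ℓ i = n) :
    ∃ I : Fin r → Ideal (MvPolynomial (Fin n) K),
      IsSqLexSubmodule K I (fun _ => 0) ∧
      (∀ (j : Fin r) (A : Finset (Fin n)), IsMinGen K (I j) A → ∃ i, A.card = ℓ i) ∧
      (∀ i : Fin t, ∃ (j : Fin r) (A : Finset (Fin n)),
        IsMinGen K (I j) A ∧ A.card = ℓ i) ∧
      ∀ κ : ℕ,
        (Set.ncard {p : Fin r × Finset (Fin n) |
          IsMinGen K (I p.1) p.2 ∧ p.2.card + κ = n ∧ mIdx p.2 = n} ≠ 0 ↔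
          ∃ i, k i = κ) := by
  have ht' : t - 1 < t := by omega
  set idx : Fin r → Fin t := fun j => if h : j.1 < t then ⟨j.1, h⟩ else ⟨t - 1, ht'⟩ with hidx
  refine ⟨fun j => sqPow K n (ℓ (idx j)), ⟨fun j => ⟨isSqLex_sqPow K _, sqPow_ne_top K _ (hℓ1 _)⟩, ?_⟩, ?_, ?_, ?_⟩
  · -- submodule containment condition
    intro j h
    rw [indeg_sqPow K _ (hℓn _)]
    simp only [Nat.add_zero, Nat.sub_zero]
    apply sqPow_anti
    apply hℓ.monotone
    simp only [hidx]
    split_ifs with h1 h2 h2 <;> simp [Fin.le_def] <;> omega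
  · intro j A hA
    exact ⟨idx j, (minGen_sqPow_iff K _ A).mp hA⟩
  · intro i
    have hi : i.1 < r := lt_of_lt_of_le i.2 hr
    have hidxi : idx ⟨i.1, hi⟩ = i := by
      simp only [hidx]
      rw [dif_pos i.2]
    obtain ⟨A, _, hA⟩ := Finset.exists_subset_card_eq
      (show ℓ i ≤ (Finset.univ : Finset (Fin n)).card by simp [hℓn i])
    refine ⟨⟨i.1, hi⟩, A, ?_, hA⟩
    show IsMinGen K (sqPow K n (ℓ (idx ⟨i.1, hi⟩))) A
    rw [hidxi]
    exact (minGen_sqPow_iff K _ A).mpr hA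
  · intro κ
    constructor
    · intro hne
      obtain ⟨⟨j, A⟩, hgen, hcard, _⟩ := Set.nonempty_of_ncard_ne_zero hne
      have hgen' : IsMinGen K (sqPow K n (ℓ (idx j))) A := hgen
      have hA := (minGen_sqPow_iff K _ A).mp hgen'
      have hcard' : A.card + κ = n := hcard
      refine ⟨idx j, ?_⟩
      have := hsum (idx j)
      omega
    · rintro ⟨i, rfl⟩
      have hi : i.1 < r := lt_of_lt_of_le i.2 hr
      have hidxi : idx ⟨i.1, hi⟩ = i := by
        simp only [hidx]
        rw [dif_pos i.2]
      set last : Fin n := ⟨n - 1, by omega⟩ with hlast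
      obtain ⟨A', hA'sub, hA'⟩ := Finset.exists_subset_card_eq
        (show ℓ i - 1 ≤ (Finset.univ.erase last).card by
          rw [Finset.card_erase_of_mem (Finset.mem_univ _)]
          simp only [Finset.card_univ, Fintype.card_fin]
          have := hℓn i; omega)
      have hlastA' : last ∉ A' := fun h => (Finset.mem_erase.mp (hA'sub h)).1 rfl
      set A : Finset (Fin n) := insert last A' with hA
      have hAcard : A.card = ℓ i := by
        rw [hA, Finset.card_insert_of_notMem hlastA', hA']
        have := hℓ1 i; omega
      have hmIdx : mIdx A = n := by
        refine le_antisymm (Finset.sup_le fun x _ => x.2) ?_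
        have : last ∈ A := Finset.mem_insert_self _ _
        calc n = last.1 + 1 := by simp [hlast]; omega
          _ ≤ A.sup (fun x => x.1 + 1) := Finset.le_sup (f := fun x => x.1 + 1) this
      have : (0 : ℕ) < Set.ncard {p : Fin r × Finset (Fin n) |
          IsMinGen K (sqPow K n (ℓ (idx p.1))) p.2 ∧ p.2.card + k i = n ∧ mIdx p.2 = n} := by
        rw [Set.ncard_pos]
        refine ⟨(⟨i.1, hi⟩, A), ?_, ?_, hmIdx⟩
        · rw [hidxi]
          exact (minGen_sqPow_iff K _ A).mpr hAcard
        · rw [hAcard]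
          have := hsum i
          omega
      exact this.ne'
end
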